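/- Let r be a positive integer and let Γ = Γ₀ ⋊ Γ₁ be a semidirect product with Γ₀ ≅ H(r) and Γ₁ ≅ ℤ generated by γ; let M ∈ GL₂(ℤ) be the matrix describing the induced action of γ on Γ₀/z(Γ₀) ≅ ℤ². Suppose M has no eigenvalue equal to 1. Then: (i) the commutator subgroup [Γ, Γ] is contained in Γ₀, and [Γ,Γ]/z([Γ,Γ]), viewed inside Γ₀/z(Γ₀) ≅ ℤ², equals the image of M − Id and is a free abelian group of rank 2; (ii) [Γ, Γ] ≅ H(r') for some positive integer r', and [Γ, Γ] has finite index in Γ₀; (iii) Γ₀ = rad([Γ,Γ], Γ), the set of elements g ∈ Γ with g^k ∈ [Γ,Γ] for some positive integer k; in particular Γ₀ is a characteristic subgroup of Γ. -/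

import Mathlib

/-- The "discrete Heisenberg group" H(r): the group with presentation
⟨δ₁, δ₂, δ₃ ∣ [δ₁,δ₃] = [δ₂,δ₃] = 1, [δ₁,δ₂] = δ₃^r⟩, realized concretely as the
group of upper unitriangular 3×3 rational matrices with (1,2)-entry `a ∈ ℤ`,
(2,3)-entry `b ∈ ℤ` and (1,3)-entry `c/r` with `c ∈ ℤ`; the element ⟨a, b, c⟩
corresponds to δ₁^a δ₂^b (δ₃-part c), with δ₁ = ⟨1,0,0⟩, δ₂ = ⟨0,1,0⟩,
δ₃ = ⟨0,0,1⟩. -/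
@[ext]
structure Heis (r : ℕ) : Type where
  a : ℤ
  b : ℤ
  c : ℤ

namespace Heis

variable {r : ℕ}

instance : Mul (Heis r) :=
  ⟨fun x y => ⟨x.a + y.a, x.b + y.b, x.c + y.c + r * x.a * y.b⟩⟩

instance : One (Heis r) := ⟨⟨0, 0, 0⟩⟩

instance : Inv (Heis r) :=
  ⟨fun x => ⟨-x.a, -x.b, -x.c + r * x.a * x.b⟩⟩

@[simp] lemma mul_a (x y : Heis r) : (x * y).a = x.a + y.a := rfl
@[simp] lemma mul_b (x y : Heis r) : (x * y).b = x.b + y.b := rfl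
@[simp] lemma mul_c (x y : Heis r) : (x * y).c = x.c + y.c + r * x.a * y.b := rfl
@[simp] lemma one_a : (1 : Heis r).a = 0 := rfl
@[simp] lemma one_b : (1 : Heis r).b = 0 := rfl
@[simp] lemma one_c : (1 : Heis r).c = 0 := rfl
@[simp] lemma inv_a (x : Heis r) : x⁻¹.a = -x.a := rfl
@[simp] lemma inv_b (x : Heis r) : x⁻¹.b = -x.b := rfl
@[simp] lemma inv_c (x : Heis r) : x⁻¹.c = -x.c + r * x.a * x.b := rfl

instance instGroup : Group (Heis r) where
  mul_assoc x y z := by ext <;> simp <;> ring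
  one_mul x := by ext <;> simp
  mul_one x := by ext <;> simp
  inv_mul_cancel x := by ext <;> simp <;> ring

/-- The generator δ₁ of H(r). -/
def δ₁ : Heis r := ⟨1, 0, 0⟩

/-- The generator δ₂ of H(r). -/
def δ₂ : Heis r := ⟨0, 1, 0⟩

/-- The generator δ₃ of H(r); it generates the center of H(r) (for r > 0). -/
def δ₃ : Heis r := ⟨0, 0, 1⟩

end Heis

open Matrix

/-- The semidirect product H(r) ⋊ ℤ in which a fixed generator γ of ℤ (the image of
`Multiplicative.ofAdd 1`) acts on H(r) by the automorphism ψ. -/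
abbrev HeisSdp (r : ℕ) (ψ : MulAut (Heis r)) : Type :=
  SemidirectProduct (Heis r) (Multiplicative ℤ) (zpowersHom _ ψ)

/-- `InducedMatrix r ψ M` says that the automorphism of H(r)/z(H(r)) ≅ ℤ² induced by
the automorphism ψ of H(r) is given by the matrix M ∈ GL₂(ℤ) in the basis consisting
of the images of δ₁ and δ₂, i.e. ψ(δᵢ) = δ₁^{M₁ᵢ} δ₂^{M₂ᵢ} δ₃^{pᵢ} for i = 1,2. -/
def InducedMatrix (r : ℕ) (ψ : MulAut (Heis r)) (M : GL (Fin 2) ℤ) : Prop :=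
  (ψ Heis.δ₁).a = (M : Matrix (Fin 2) (Fin 2) ℤ) 0 0 ∧
  (ψ Heis.δ₁).b = (M : Matrix (Fin 2) (Fin 2) ℤ) 1 0 ∧
  (ψ Heis.δ₂).a = (M : Matrix (Fin 2) (Fin 2) ℤ) 0 1 ∧
  (ψ Heis.δ₂).b = (M : Matrix (Fin 2) (Fin 2) ℤ) 1 1

/-- The projection H(r) → H(r)/z(H(r)) ≅ ℤ², sending a group element to the vector of
exponents of δ₁ and δ₂. -/
def heisProj (r : ℕ) : Heis r →* Multiplicative (Fin 2 → ℤ) where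
  toFun x := Multiplicative.ofAdd ![x.a, x.b]
  map_one' := by
    simp only [← ofAdd_zero]
    exact congrArg Multiplicative.ofAdd (by funext i; fin_cases i <;> rfl)
  map_mul' x y := by
    rw [← ofAdd_add]
    exact congrArg Multiplicative.ofAdd (by funext i; fin_cases i <;> simp)


namespace HeisAux
open Heis Subgroup
open scoped commutatorElement

/-! ### Triangular numbers -/

/-- triangular numbers on ℤ -/
def T (n : ℤ) : ℤ := n * (n - 1) / 2

lemma two_mul_T (n : ℤ) : 2 * T n = n * (n - 1) := by
  have h : Even (n * (n - 1)) := by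
    rcases Int.even_or_odd n with h | h
    · exact h.mul_right _
    · exact (by simpa using h.sub_odd odd_one : Even (n - 1)).mul_left _
  obtain ⟨k, hk⟩ := h
  have h2 : n * (n - 1) = 2 * k := by omega
  rw [T, h2]; omega

lemma T_add (m n : ℤ) : T (m + n) = T m + T n + m * n := by
  apply mul_left_cancel₀ (show (2:ℤ) ≠ 0 by norm_num)
  nlinarith [two_mul_T (m + n), two_mul_T m, two_mul_T n]

lemma T_zero : T 0 = 0 := rfl
lemma T_one : T 1 = 0 := rfl

/-! ### Basic computations in `Heis r` -/

variable {r : ℕ}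

lemma zpow_eval (x : Heis r) (n : ℤ) :
    x ^ n = ⟨n * x.a, n * x.b, n * x.c + r * x.a * x.b * T n⟩ := by
  induction n using Int.induction_on with
  | zero => ext <;> simp [T_zero]
  | succ k ih =>
      rw [_root_.zpow_add_one, ih]
      ext
      · simp; ring
      · simp; ring
      · simp [T_add, T_one]; ring
  | pred k ih =>
      rw [_root_.zpow_sub_one, ih]
      ext
      · simp; ring
      · simp; ring
      · have hT : T (-(k:ℤ) - 1) = T (-(k:ℤ)) + ((k:ℤ) + 1) := by
          have := T_add (-(k:ℤ) - 1) 1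
          simp [T_one] at this; linarith
        simp [hT]; ring

lemma central_mul_comm {x : Heis r} (ha : x.a = 0) (hb : x.b = 0) (y : Heis r) :
    x * y = y * x := by
  ext <;> simp [ha, hb] <;> ring

lemma comm_eval (x y : Heis r) :
    ⁅x, y⁆ = ⟨0, 0, r * (x.a * y.b - x.b * y.a)⟩ := by
  rw [commutatorElement_def]
  ext <;> simp <;> ring

lemma decomp (x : Heis r) :
    x = (⟨x.a, 0, 0⟩ : Heis r) * ⟨0, x.b, 0⟩ * ⟨0, 0, x.c - r * x.a * x.b⟩ := by
  ext <;> simp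

lemma d1_zpow (n : ℤ) : (δ₁ : Heis r) ^ n = ⟨n, 0, 0⟩ := by
  rw [zpow_eval]; ext <;> simp [δ₁]

lemma d2_zpow (n : ℤ) : (δ₂ : Heis r) ^ n = ⟨0, n, 0⟩ := by
  rw [zpow_eval]; ext <;> simp [δ₂]

lemma d3_zpow (n : ℤ) : (δ₃ : Heis r) ^ n = ⟨0, 0, n⟩ := by
  rw [zpow_eval]; ext <;> simp [δ₃]

@[simp] lemma d1_a : (δ₁ : Heis r).a = 1 := rfl
@[simp] lemma d1_b : (δ₁ : Heis r).b = 0 := rfl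
@[simp] lemma d1_c : (δ₁ : Heis r).c = 0 := rfl
@[simp] lemma d2_a : (δ₂ : Heis r).a = 0 := rfl
@[simp] lemma d2_b : (δ₂ : Heis r).b = 1 := rfl
@[simp] lemma d2_c : (δ₂ : Heis r).c = 0 := rfl

variable (ψ : MulAut (Heis r))

lemma psi_central (hr : 0 < r) {x : Heis r} (ha : x.a = 0) (hb : x.b = 0) :
    (ψ x).a = 0 ∧ (ψ x).b = 0 := by
  have hcomm : ∀ y : Heis r, ψ x * y = y * ψ x := by
    intro y
    have : ψ x * ψ (ψ.symm y) = ψ (ψ.symm y) * ψ x := by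
      rw [← _root_.map_mul, ← _root_.map_mul, central_mul_comm ha hb]
    simpa using this
  constructor
  · have h := congrArg Heis.c (hcomm δ₂)
    simp [δ₂] at h
    exact h.resolve_left hr.ne'
  · have h := congrArg Heis.c (hcomm δ₁)
    simp [δ₁] at h
    exact h.resolve_left hr.ne'

variable {A B C D : ℤ}

lemma psi_ab (hr : 0 < r)
    (hA : (ψ δ₁).a = A) (hC : (ψ δ₁).b = C) (hB : (ψ δ₂).a = B) (hD : (ψ δ₂).b = D)
    (x : Heis r) : (ψ x).a = A * x.a + B * x.b ∧ (ψ x).b = C * x.a + D * x.b := by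
  have hd := decomp x
  have h1 : (⟨x.a, 0, 0⟩ : Heis r) = δ₁ ^ x.a := (d1_zpow x.a).symm
  have h2 : (⟨0, x.b, 0⟩ : Heis r) = δ₂ ^ x.b := (d2_zpow x.b).symm
  have h3 := psi_central ψ hr (x := ⟨0, 0, x.c - r * x.a * x.b⟩) rfl rfl
  rw [h1, h2] at hd
  have := congrArg ψ hd
  rw [_root_.map_mul, _root_.map_mul, map_zpow, map_zpow] at this
  rw [this]
  constructor
  · simp [zpow_eval, h3.1, h3.2, hA, hB]; ring
  · simp [zpow_eval, h3.1, h3.2, hC, hD]; ring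


/-! ### The subgroup `KS` -/

def genSet (ψ : MulAut (Heis r)) : Set (Heis r) :=
  {z | ∃ x y : Heis r, z = ⁅x, y⁆} ∪ {z | ∃ x : Heis r, z = ψ x * x⁻¹}

def KS (ψ : MulAut (Heis r)) : Subgroup (Heis r) := Subgroup.closure (genSet ψ)

lemma comm_mem (x y : Heis r) : ⁅x, y⁆ ∈ KS ψ :=
  Subgroup.subset_closure (Or.inl ⟨x, y, rfl⟩)

lemma psi_mul_inv_mem (x : Heis r) : ψ x * x⁻¹ ∈ KS ψ :=
  Subgroup.subset_closure (Or.inr ⟨x, rfl⟩)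

lemma KS_normal : (KS ψ).Normal := by
  constructor
  intro n hn g
  rw [show g * n * g⁻¹ = ⁅g, n⁆ * n by group]
  exact mul_mem (comm_mem ψ g n) hn

lemma psi_zpow_mul_inv_mem (n : ℤ) (x : Heis r) : (ψ ^ n) x * x⁻¹ ∈ KS ψ := by
  induction n using Int.induction_on with
  | zero => simpa using one_mem (KS ψ)
  | succ k ih =>
      have h1 : ψ ((ψ ^ (k:ℤ)) x) * ((ψ ^ (k:ℤ)) x)⁻¹ ∈ KS ψ := psi_mul_inv_mem ψ _
      have := mul_mem h1 ih
      rw [show ψ ((ψ ^ (k:ℤ)) x) * ((ψ ^ (k:ℤ)) x)⁻¹ * ((ψ ^ (k:ℤ)) x * x⁻¹)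
            = ψ ((ψ ^ (k:ℤ)) x) * x⁻¹ by group] at this
      have hψ : ψ ((ψ ^ (k:ℤ)) x) = (ψ ^ ((k:ℤ) + 1)) x := by
        rw [show (k:ℤ) + 1 = 1 + k by ring, _root_.zpow_add, zpow_one]
        rfl
      rwa [hψ] at this
  | pred k ih =>
      set y := (ψ ^ (-(k:ℤ) - 1)) x with hy
      have h1 : (ψ y * y⁻¹)⁻¹ ∈ KS ψ := inv_mem (psi_mul_inv_mem ψ y)
      have hψ : ψ y = (ψ ^ (-(k:ℤ))) x := by
        rw [hy, show ψ ((ψ ^ (-(k:ℤ) - 1)) x) = (ψ ^ (1:ℤ)) ((ψ ^ (-(k:ℤ) - 1)) x) from rfl,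
          ← MulAut.mul_apply, ← _root_.zpow_add]
        norm_num
      have := mul_mem h1 ih
      rwa [show (ψ y * y⁻¹)⁻¹ * ((ψ ^ (-(k:ℤ))) x * x⁻¹)
            = y * (ψ y)⁻¹ * ((ψ ^ (-(k:ℤ))) x * x⁻¹) by group, hψ,
          show y * ((ψ ^ (-(k:ℤ))) x)⁻¹ * ((ψ ^ (-(k:ℤ))) x * x⁻¹) = y * x⁻¹ by group] at this

instance : (KS ψ).Normal := KS_normal ψ

lemma mkQ_comm (a b : Heis r) :
    QuotientGroup.mk' (KS ψ) a * QuotientGroup.mk' (KS ψ) b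
      = QuotientGroup.mk' (KS ψ) b * QuotientGroup.mk' (KS ψ) a := by
  rw [← _root_.map_mul, ← _root_.map_mul]
  apply (QuotientGroup.mk'_eq_mk' _).mpr
  exact ⟨⁅b⁻¹, a⁻¹⁆, comm_mem ψ _ _, by group⟩

lemma mkQ_psi_zpow (n : ℤ) (x : Heis r) :
    QuotientGroup.mk' (KS ψ) ((ψ ^ n) x) = QuotientGroup.mk' (KS ψ) x := by
  apply (QuotientGroup.mk'_eq_mk' _).mpr
  refine ⟨((ψ ^ n) x)⁻¹ * ((ψ ^ n) x * x⁻¹)⁻¹ * (((ψ ^ n) x)⁻¹)⁻¹, ?_, by group⟩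
  exact (KS_normal ψ).conj_mem _ (inv_mem (psi_zpow_mul_inv_mem ψ n x)) _

/-- the natural map `Γ → Heis r ⧸ KS ψ` -/
def fQ (ψ : MulAut (Heis r)) : HeisSdp r ψ →* Heis r ⧸ KS ψ :=
  SemidirectProduct.lift (QuotientGroup.mk' (KS ψ)) 1 (by
    intro g
    ext x
    simp only [MonoidHom.comp_apply, MonoidHom.one_apply, _root_.map_one]
    show QuotientGroup.mk' (KS ψ) ((zpowersHom _ ψ g) x) = _
    rw [zpowersHom_apply]
    rw [mkQ_psi_zpow ψ (Multiplicative.toAdd g) x]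
    simp)

lemma fQ_apply (g : HeisSdp r ψ) : fQ ψ g = QuotientGroup.mk' (KS ψ) g.left := by
  have hg : g = SemidirectProduct.inl g.left * SemidirectProduct.inr g.right :=
    (SemidirectProduct.inl_left_mul_inr_right g).symm
  rw [hg, _root_.map_mul]
  simp [fQ]

lemma commutator_le_range :
    commutator (HeisSdp r ψ) ≤ (SemidirectProduct.inl : Heis r →* HeisSdp r ψ).range := by
  rw [commutator_def, SemidirectProduct.range_inl_eq_ker_rightHom, Subgroup.commutator_le]
  intro g _ h _
  rw [MonoidHom.mem_ker, map_commutatorElement]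
  exact commutatorElement_eq_one_iff_commute.mpr (mul_comm _ _)

lemma commutator_le_map :
    commutator (HeisSdp r ψ) ≤ Subgroup.map SemidirectProduct.inl (KS ψ) := by
  rw [commutator_def, Subgroup.commutator_le]
  intro g _ h _
  have hker : ⁅g, h⁆ ∈ (SemidirectProduct.inl : Heis r →* HeisSdp r ψ).range :=
    commutator_le_range ψ
      (Subgroup.commutator_mem_commutator (Subgroup.mem_top g) (Subgroup.mem_top h))
  obtain ⟨n, hn⟩ := hker
  have h1 : fQ ψ ⁅g, h⁆ = 1 := by
    rw [map_commutatorElement]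
    apply commutatorElement_eq_one_iff_commute.mpr
    rw [fQ_apply, fQ_apply]
    exact mkQ_comm ψ _ _
  rw [← hn] at h1
  have h2 : QuotientGroup.mk' (KS ψ) n = 1 := by
    rw [← h1, fQ_apply]
    simp
  exact ⟨n, (QuotientGroup.eq_one_iff n).mp h2, hn⟩

lemma map_le_commutator :
    Subgroup.map SemidirectProduct.inl (KS ψ) ≤ commutator (HeisSdp r ψ) := by
  rw [Subgroup.map_le_iff_le_comap, KS, Subgroup.closure_le]
  rintro z (⟨x, y, rfl⟩ | ⟨x, rfl⟩)
  · show SemidirectProduct.inl ⁅x, y⁆ ∈ commutator (HeisSdp r ψ)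
    rw [map_commutatorElement]
    exact commutator_mem_commutator (Subgroup.mem_top _) (Subgroup.mem_top _)
  · show SemidirectProduct.inl (ψ x * x⁻¹) ∈ commutator (HeisSdp r ψ)
    have hψ : (zpowersHom (MulAut (Heis r)) ψ (Multiplicative.ofAdd 1)) x = ψ x := by
      rw [zpowersHom_apply]
      simp
    have h2 := SemidirectProduct.inl_aut (φ := zpowersHom (MulAut (Heis r)) ψ)
      (Multiplicative.ofAdd 1) x
    rw [hψ] at h2
    rw [_root_.map_mul, map_inv, h2]
    have h3 : SemidirectProduct.inr (Multiplicative.ofAdd 1) * SemidirectProduct.inl x *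
        SemidirectProduct.inr (Multiplicative.ofAdd (1:ℤ))⁻¹ * (SemidirectProduct.inl x)⁻¹
        = ⁅(SemidirectProduct.inr (Multiplicative.ofAdd 1) :
              HeisSdp r ψ), (SemidirectProduct.inl x : HeisSdp r ψ)⁆ := by
      rw [commutatorElement_def, map_inv]
    rw [h3]
    exact commutator_mem_commutator (Subgroup.mem_top _) (Subgroup.mem_top _)

lemma commutator_eq_map :
    commutator (HeisSdp r ψ) = Subgroup.map SemidirectProduct.inl (KS ψ) :=
  le_antisymm (commutator_le_map ψ) (map_le_commutator ψ)

lemma comap_commutator_eq :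
    Subgroup.comap (SemidirectProduct.inl : Heis r →* HeisSdp r ψ)
      (commutator (HeisSdp r ψ)) = KS ψ := by
  rw [commutator_eq_map]
  exact Subgroup.comap_map_eq_self_of_injective SemidirectProduct.inl_injective _


/-! ### Structure of `KS` -/

def uu (ψ : MulAut (Heis r)) : Heis r := ψ δ₁ * δ₁⁻¹
def vv (ψ : MulAut (Heis r)) : Heis r := ψ δ₂ * δ₂⁻¹

lemma uu_mem : uu ψ ∈ KS ψ := psi_mul_inv_mem ψ δ₁
lemma vv_mem : vv ψ ∈ KS ψ := psi_mul_inv_mem ψ δ₂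

variable {ψ}

lemma uu_a (hA : (ψ δ₁).a = A) : (uu ψ).a = A - 1 := by
  simp [uu, hA]; ring
lemma uu_b (hC : (ψ δ₁).b = C) : (uu ψ).b = C := by
  simp [uu, hC]
lemma vv_a (hB : (ψ δ₂).a = B) : (vv ψ).a = B := by
  simp [vv, hB]
lemma vv_b (hD : (ψ δ₂).b = D) : (vv ψ).b = D - 1 := by
  simp [vv, hD]; ring

lemma uv_zpow_a (hA : (ψ δ₁).a = A) (hC : (ψ δ₁).b = C) (hB : (ψ δ₂).a = B)
    (hD : (ψ δ₂).b = D) (m n : ℤ) :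
    (uu ψ ^ m * vv ψ ^ n).a = m * (A - 1) + n * B ∧
      (uu ψ ^ m * vv ψ ^ n).b = m * C + n * (D - 1) := by
  rw [zpow_eval, zpow_eval]
  constructor
  · simp [uu_a hA, vv_a hB]
  · simp [uu_b hC, vv_b hD]

lemma KS_proj (hr : 0 < r) (hA : (ψ δ₁).a = A) (hC : (ψ δ₁).b = C)
    (hB : (ψ δ₂).a = B) (hD : (ψ δ₂).b = D) {x : Heis r} (hx : x ∈ KS ψ) :
    ∃ m n : ℤ, x.a = m * (A - 1) + n * B ∧ x.b = m * C + n * (D - 1) := by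
  induction hx using Subgroup.closure_induction with
  | mem z hz =>
      rcases hz with ⟨x, y, rfl⟩ | ⟨x, rfl⟩
      · exact ⟨0, 0, by rw [comm_eval]; norm_num⟩
      · refine ⟨x.a, x.b, ?_, ?_⟩
        · have := (psi_ab ψ hr hA hC hB hD x).1
          simp [this]; ring
        · have := (psi_ab ψ hr hA hC hB hD x).2
          simp [this]; ring
  | one => exact ⟨0, 0, by norm_num⟩
  | mul x y _ _ ihx ihy =>
      obtain ⟨m, n, h1, h2⟩ := ihx
      obtain ⟨m', n', h1', h2'⟩ := ihy
      exact ⟨m + m', n + n', by simp [h1, h1']; ring, by simp [h2, h2']; ring⟩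
  | inv x _ ihx =>
      obtain ⟨m, n, h1, h2⟩ := ihx
      exact ⟨-m, -n, by simp [h1]; ring, by simp [h2]; ring⟩

lemma KS_decomp (hr : 0 < r) (hA : (ψ δ₁).a = A) (hC : (ψ δ₁).b = C)
    (hB : (ψ δ₂).a = B) (hD : (ψ δ₂).b = D) {x : Heis r} (hx : x ∈ KS ψ) :
    ∃ m n e : ℤ, (⟨0, 0, e⟩ : Heis r) ∈ KS ψ ∧ x = ⟨0, 0, e⟩ * (uu ψ ^ m * vv ψ ^ n) := by
  obtain ⟨m, n, h1, h2⟩ := KS_proj hr hA hC hB hD hx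
  set w := uu ψ ^ m * vv ψ ^ n with hw
  have hwmem : w ∈ KS ψ := mul_mem (zpow_mem (uu_mem ψ) m) (zpow_mem (vv_mem ψ) n)
  have hwa := (uv_zpow_a hA hC hB hD m n).1
  have hwb := (uv_zpow_a hA hC hB hD m n).2
  rw [← hw] at hwa hwb
  have hxa : x.a = w.a := by rw [hwa, h1]
  have hxb : x.b = w.b := by rw [hwb, h2]
  have hza : (x * w⁻¹).a = 0 := by rw [mul_a, inv_a, hxa]; ring
  have hzb : (x * w⁻¹).b = 0 := by rw [mul_b, inv_b, hxb]; ring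
  refine ⟨m, n, (x * w⁻¹).c, ?_, ?_⟩
  · have h5 : x * w⁻¹ = ⟨0, 0, (x * w⁻¹).c⟩ := by ext <;> simp [hza, hzb]
    rw [← h5]
    exact mul_mem hx (inv_mem hwmem)
  · rw [← hw]
    ext
    · simp [hxa]
    · simp [hxb]
    · simp only [mul_c, mul_a, inv_c, inv_b, mul_b, inv_a]
      rw [hxa]
      ring


/-! ### The central part of `KS` -/

def Kc (ψ : MulAut (Heis r)) : AddSubgroup ℤ where
  carrier := {e | (⟨0, 0, e⟩ : Heis r) ∈ KS ψ}
  zero_mem' := by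
    show (⟨0, 0, (0:ℤ)⟩ : Heis r) ∈ KS ψ
    exact (by rfl : (⟨0,0,(0:ℤ)⟩ : Heis r) = 1) ▸ one_mem (KS ψ)
  add_mem' := by
    intro e e' he he'
    have he1 : (⟨0,0,e⟩ : Heis r) ∈ KS ψ := he
    have he2 : (⟨0,0,e'⟩ : Heis r) ∈ KS ψ := he'
    have := mul_mem he1 he2
    have h2 : (⟨0,0,e⟩ : Heis r) * ⟨0,0,e'⟩ = ⟨0,0,e+e'⟩ := by ext <;> simp
    rwa [h2] at this
  neg_mem' := by
    intro e he
    have he1 : (⟨0,0,e⟩ : Heis r) ∈ KS ψ := he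
    have := inv_mem he1
    have h2 : (⟨0,0,e⟩ : Heis r)⁻¹ = ⟨0,0,-e⟩ := by ext <;> simp
    rwa [h2] at this

lemma r_mem_Kc : (r : ℤ) ∈ Kc ψ := by
  have h := comm_mem ψ (δ₁ : Heis r) δ₂
  rw [comm_eval] at h
  show (⟨0,0,(r:ℤ)⟩ : Heis r) ∈ KS ψ
  simpa using h

lemma d3c_zpow (e n : ℤ) : (⟨0, 0, e⟩ : Heis r) ^ n = ⟨0, 0, n * e⟩ := by
  rw [zpow_eval]; ext <;> simp

/-! ### An explicit homomorphism from a Heisenberg group -/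

/-- linear independence from nonvanishing determinant -/
lemma indep {p q p' q' : ℤ} (hd : p * q' - q * p' ≠ 0) {m n : ℤ}
    (h1 : m * p + n * p' = 0) (h2 : m * q + n * q' = 0) : m = 0 ∧ n = 0 := by
  constructor
  · have : m * (p * q' - q * p') = q' * (m * p + n * p') - p' * (m * q + n * q') := by ring
    rw [h1, h2] at this
    simp at this
    rcases this with h | h
    · exact h
    · exact absurd h hd
  · have : n * (p * q' - q * p') = p * (m * q + n * q') - q * (m * p + n * p') := by ring
    rw [h1, h2] at this
    simp at this
    rcases this with h | h
    · exact h
    · exact absurd h hd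

def heisHom (u v : Heis r) (s' : ℤ) (r' : ℕ)
    (h : s' * (r' : ℤ) = r * (u.a * v.b - u.b * v.a)) : Heis r' →* Heis r where
  toFun x := ⟨x.a * u.a + x.b * v.a, x.a * u.b + x.b * v.b,
    x.a * u.c + x.b * v.c +
      r * (u.a * u.b * T x.a + v.a * v.b * T x.b + x.a * x.b * u.a * v.b) +
      s' * (x.c - r' * x.a * x.b)⟩
  map_one' := by ext <;> simp [T_zero]
  map_mul' x y := by
    ext
    · simp; ring
    · simp; ring
    · simp only [mul_c, mul_a, mul_b, T_add]
      push_cast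
      linear_combination (-(x.b * y.a)) * h

lemma heisHom_eval (u v : Heis r) (s' : ℤ) (r' : ℕ)
    (h : s' * (r' : ℤ) = r * (u.a * v.b - u.b * v.a)) (x : Heis r') :
    heisHom u v s' r' h x = u ^ x.a * v ^ x.b * (⟨0,0,s'⟩ : Heis r) ^ (x.c - r' * x.a * x.b) := by
  rw [zpow_eval, zpow_eval, d3c_zpow]
  ext
  · show x.a * u.a + x.b * v.a = _
    simp
  · show x.a * u.b + x.b * v.b = _
    simp
  · show x.a * u.c + x.b * v.c + _ + _ = _
    simp
    ring

lemma heisHom_injective (u v : Heis r) (s' : ℤ) (r' : ℕ)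
    (h : s' * (r' : ℤ) = r * (u.a * v.b - u.b * v.a))
    (hd : u.a * v.b - u.b * v.a ≠ 0) (hs' : s' ≠ 0) :
    Function.Injective (heisHom u v s' r' h) := by
  intro x y hxy
  have ha : x.a * u.a + x.b * v.a = y.a * u.a + y.b * v.a := congrArg Heis.a hxy
  have hb : x.a * u.b + x.b * v.b = y.a * u.b + y.b * v.b := congrArg Heis.b hxy
  have hc : x.a * u.c + x.b * v.c +
      r * (u.a * u.b * T x.a + v.a * v.b * T x.b + x.a * x.b * u.a * v.b) +
      s' * (x.c - r' * x.a * x.b) = y.a * u.c + y.b * v.c +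
      r * (u.a * u.b * T y.a + v.a * v.b * T y.b + y.a * y.b * u.a * v.b) +
      s' * (y.c - r' * y.a * y.b) := congrArg Heis.c hxy
  have h1 : (x.a - y.a) * u.a + (x.b - y.b) * v.a = 0 := by linarith
  have h2 : (x.a - y.a) * u.b + (x.b - y.b) * v.b = 0 := by linarith
  obtain ⟨e1, e2⟩ := indep hd h1 h2
  have hxa : x.a = y.a := by linarith
  have hxb : x.b = y.b := by linarith
  rw [hxa, hxb] at hc
  have hcc : s' * x.c = s' * y.c := by linarith
  have := mul_left_cancel₀ hs' hcc
  ext <;> assumption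


lemma heisHom_range (hr : 0 < r) (hA : (ψ δ₁).a = A) (hC : (ψ δ₁).b = C)
    (hB : (ψ δ₂).a = B) (hD : (ψ δ₂).b = D) (s' : ℤ) (r' : ℕ)
    (h : s' * (r' : ℤ) = r * ((uu ψ).a * (vv ψ).b - (uu ψ).b * (vv ψ).a))
    (hgen : ∀ e : ℤ, e ∈ Kc ψ ↔ s' ∣ e) (x : Heis r) :
    x ∈ KS ψ ↔ ∃ y : Heis r', heisHom (uu ψ) (vv ψ) s' r' h y = x := by
  constructor
  · intro hx
    obtain ⟨m, n, e, hmem, hxeq⟩ := KS_decomp hr hA hC hB hD hx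
    obtain ⟨k, hk⟩ := (hgen e).mp hmem
    refine ⟨⟨m, n, k + (r' : ℤ) * m * n⟩, ?_⟩
    rw [heisHom_eval]
    show uu ψ ^ m * vv ψ ^ n * (⟨0,0,s'⟩ : Heis r) ^ (k + (r':ℤ) * m * n - (r':ℤ) * m * n) = x
    rw [show k + (r':ℤ) * m * n - (r':ℤ) * m * n = k by ring, d3c_zpow, hxeq,
      central_mul_comm (x := (⟨0,0,e⟩ : Heis r)) rfl rfl]
    congr 1
    ext <;> simp [hk] <;> try ring
  · rintro ⟨y, rfl⟩
    rw [heisHom_eval]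
    have hs'mem : (⟨0,0,s'⟩ : Heis r) ∈ KS ψ := (hgen s').mpr dvd_rfl
    exact mul_mem (mul_mem (zpow_mem (uu_mem ψ) _) (zpow_mem (vv_mem ψ) _)) (zpow_mem hs'mem _)

lemma KS_finite_quotient (hr : 0 < r) (hA : (ψ δ₁).a = A) (hC : (ψ δ₁).b = C)
    (hB : (ψ δ₂).a = B) (hD : (ψ δ₂).b = D)
    (hd : (A - 1) * (D - 1) - C * B ≠ 0) : Finite (Heis r ⧸ KS ψ) := by
  set d₀ : ℤ := (A - 1) * (D - 1) - C * B with hd₀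
  set D₀ : ℤ := (d₀.natAbs : ℤ) with hD₀def
  have hD₀pos : (0 : ℤ) < D₀ := by
    rw [hD₀def]
    exact_mod_cast Int.natAbs_pos.mpr hd
  have hrpos : (0 : ℤ) < (r : ℤ) := by exact_mod_cast hr
  apply Finite.of_surjective
    (f := fun p : Fin d₀.natAbs × Fin d₀.natAbs × Fin r =>
      (QuotientGroup.mk (⟨((p.1 : ℕ) : ℤ), ((p.2.1 : ℕ) : ℤ), ((p.2.2 : ℕ) : ℤ)⟩ : Heis r)
        : Heis r ⧸ KS ψ))
  intro q
  obtain ⟨x, rfl⟩ := QuotientGroup.mk_surjective q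
  set α : ℤ := x.a / D₀ with hα
  set β : ℤ := x.b / D₀ with hβ
  set ε : ℤ := d₀.sign with hε
  have hsign : d₀ * ε = D₀ := Int.mul_sign_self d₀
  set m : ℤ := ((D - 1) * α - B * β) * ε with hm
  set n : ℤ := (-C * α + (A - 1) * β) * ε with hn
  set y : Heis r := uu ψ ^ m * vv ψ ^ n with hy
  have hymem : y ∈ KS ψ := mul_mem (zpow_mem (uu_mem ψ) m) (zpow_mem (vv_mem ψ) n)
  have hya : y.a = D₀ * α := by
    rw [hy, (uv_zpow_a hA hC hB hD m n).1, hm, hn]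
    linear_combination α * hsign
  have hyb : y.b = D₀ * β := by
    rw [hy, (uv_zpow_a hA hC hB hD m n).2, hm, hn]
    linear_combination β * hsign
  set x1 : Heis r := y⁻¹ * x with hx1
  have hx1a : x1.a = x.a % D₀ := by
    rw [hx1, mul_a, inv_a, hya, Int.emod_def, hα]; ring
  have hx1b : x1.b = x.b % D₀ := by
    rw [hx1, mul_b, inv_b, hyb, Int.emod_def, hβ]; ring
  set γ : ℤ := x1.c / (r : ℤ) with hγ
  have hzmem : (⟨0, 0, γ * (r:ℤ)⟩ : Heis r) ∈ KS ψ := by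
    have := AddSubgroup.zsmul_mem (Kc ψ) (r_mem_Kc (ψ := ψ)) γ
    have h2 : γ • (r : ℤ) = γ * (r : ℤ) := zsmul_eq_mul _ _
    rw [h2] at this
    exact this
  set z : Heis r := ⟨0, 0, γ * (r:ℤ)⟩ with hz
  set x2 : Heis r := x1 * z⁻¹ with hx2
  have hx2a : x2.a = x.a % D₀ := by rw [hx2, mul_a, hz, hx1a]; simp
  have hx2b : x2.b = x.b % D₀ := by rw [hx2, mul_b, hz, hx1b]; simp
  have hx2c : x2.c = x1.c % (r : ℤ) := by
    rw [hx2, mul_c, hz, Int.emod_def, hγ]; simp; ring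
  have hbnd : 0 ≤ x2.a ∧ x2.a < D₀ ∧ 0 ≤ x2.b ∧ x2.b < D₀ ∧ 0 ≤ x2.c ∧ x2.c < (r:ℤ) := by
    refine ⟨?_, ?_, ?_, ?_, ?_, ?_⟩
    · rw [hx2a]; exact Int.emod_nonneg _ hD₀pos.ne'
    · rw [hx2a]; exact Int.emod_lt_of_pos _ hD₀pos
    · rw [hx2b]; exact Int.emod_nonneg _ hD₀pos.ne'
    · rw [hx2b]; exact Int.emod_lt_of_pos _ hD₀pos
    · rw [hx2c]; exact Int.emod_nonneg _ hrpos.ne'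
    · rw [hx2c]; exact Int.emod_lt_of_pos _ hrpos
  obtain ⟨b1, b2, b3, b4, b5, b6⟩ := hbnd
  refine ⟨⟨⟨x2.a.toNat, ?_⟩, ⟨x2.b.toNat, ?_⟩, ⟨x2.c.toNat, ?_⟩⟩, ?_⟩
  · exact (Int.toNat_lt b1).mpr (by rw [← hD₀def]; exact b2)
  · exact (Int.toNat_lt b3).mpr (by rw [← hD₀def]; exact b4)
  · exact (Int.toNat_lt b5).mpr b6
  · show QuotientGroup.mk (⟨(x2.a.toNat : ℤ), (x2.b.toNat : ℤ), (x2.c.toNat : ℤ)⟩ : Heis r)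
      = QuotientGroup.mk x
    have hcast : (⟨(x2.a.toNat : ℤ), (x2.b.toNat : ℤ), (x2.c.toNat : ℤ)⟩ : Heis r) = x2 := by
      ext <;> simp [Int.toNat_of_nonneg, b1, b3, b5]
    rw [hcast]
    have : (QuotientGroup.mk' (KS ψ)) x2 = (QuotientGroup.mk' (KS ψ)) x := by
      rw [hx2, hx1, mul_assoc, _root_.map_mul, _root_.map_mul, map_inv, map_inv]
      have hy1 : (QuotientGroup.mk' (KS ψ)) y = 1 := (QuotientGroup.eq_one_iff y).mpr hymem
      have hz1 : (QuotientGroup.mk' (KS ψ)) z = 1 := (QuotientGroup.eq_one_iff z).mpr hzmem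
      rw [hy1, hz1]
      group
    exact this

end HeisAux

open HeisAux in
/-- Lemma A.10: let Γ = Γ₀ ⋊ ℤ with Γ₀ = H(r), where the generator of ℤ acts via an
automorphism ψ inducing the matrix M ∈ GL₂(ℤ) on Γ₀/z(Γ₀) ≅ ℤ², and suppose M has no
eigenvalue equal to 1. Then (i) [Γ,Γ] ⊆ Γ₀ and the image of [Γ,Γ] in Γ₀/z(Γ₀) ≅ ℤ²
equals the image of M − Id and is free abelian of rank 2; (ii) [Γ,Γ] ≅ H(r') for some
positive r' and has finite index in Γ₀; (iii) Γ₀ = rad([Γ,Γ],Γ), the set of g ∈ Γ with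
g^k ∈ [Γ,Γ] for some k > 0; in particular Γ₀ is a characteristic subgroup of Γ. -/
theorem stmt_16 (r : ℕ) (hr : 0 < r) (ψ : MulAut (Heis r)) (M : GL (Fin 2) ℤ)
    (hM : InducedMatrix r ψ M)
    (hEig : ¬ (((M : Matrix (Fin 2) (Fin 2) ℤ).map ((↑) : ℤ → ℂ)).charpoly).IsRoot 1) :
    (commutator (HeisSdp r ψ) ≤
        (SemidirectProduct.inl : Heis r →* HeisSdp r ψ).range ∧
      Subgroup.map (heisProj r)
          (Subgroup.comap (SemidirectProduct.inl : Heis r →* HeisSdp r ψ)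
            (commutator (HeisSdp r ψ))) =
        AddSubgroup.toSubgroup
          (LinearMap.range
            (Matrix.mulVecLin ((M : Matrix (Fin 2) (Fin 2) ℤ) - 1))).toAddSubgroup ∧
      Nonempty ((Subgroup.map (heisProj r)
          (Subgroup.comap (SemidirectProduct.inl : Heis r →* HeisSdp r ψ)
            (commutator (HeisSdp r ψ)))) ≃* Multiplicative (Fin 2 → ℤ))) ∧
    ((∃ r' : ℕ, 0 < r' ∧ Nonempty (commutator (HeisSdp r ψ) ≃* Heis r')) ∧
      (Subgroup.comap (SemidirectProduct.inl : Heis r →* HeisSdp r ψ)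
        (commutator (HeisSdp r ψ))).FiniteIndex) ∧
    ((∀ g : HeisSdp r ψ,
        g ∈ (SemidirectProduct.inl : Heis r →* HeisSdp r ψ).range ↔
          ∃ k : ℕ, 0 < k ∧ g ^ k ∈ commutator (HeisSdp r ψ)) ∧
      Subgroup.Characteristic
        (SemidirectProduct.inl : Heis r →* HeisSdp r ψ).range) := by
    classical
  obtain ⟨hA, hC, hB, hD⟩ := hM
  set M' : Matrix (Fin 2) (Fin 2) ℤ := (M : Matrix (Fin 2) (Fin 2) ℤ) with hM'def
  -- the determinant of M - 1 is nonzero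
  have hd : (M' 0 0 - 1) * (M' 1 1 - 1) - (M' 1 0) * (M' 0 1) ≠ 0 := by
    intro h
    apply hEig
    rw [Polynomial.IsRoot, Matrix.charpoly, Matrix.det_fin_two]
    simp [Matrix.charmatrix_apply_eq, Matrix.charmatrix_apply_ne, Matrix.map_apply]
    have h2 : (((M' 0 0 - 1) * (M' 1 1 - 1) - (M' 1 0) * (M' 0 1) : ℤ) : ℂ) = 0 := by
      rw [h]; norm_num
    push_cast at h2
    linear_combination h2
  -- a generator s₀ for the central part of KS
  obtain ⟨s₀, hs₀⟩ := Int.subgroup_cyclic (Kc ψ)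
  have hmemKc : ∀ e : ℤ, e ∈ Kc ψ ↔ s₀ ∣ e := by
    intro e
    rw [hs₀, AddSubgroup.mem_closure_singleton]
    constructor
    · rintro ⟨n, rfl⟩
      exact Dvd.intro_left n rfl
    · rintro ⟨c, rfl⟩
      exact ⟨c, by rw [smul_eq_mul, mul_comm]⟩
  have hrKc : (r : ℤ) ∈ Kc ψ := r_mem_Kc
  have hs₀r := (hmemKc r).mp hrKc
  have hs₀ne : s₀ ≠ 0 := by
    rintro rfl
    obtain ⟨c, hc⟩ := hs₀r
    simp at hc
    omega
  have huv : (uu ψ).a * (vv ψ).b - (uu ψ).b * (vv ψ).a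
      = (M' 0 0 - 1) * (M' 1 1 - 1) - (M' 1 0) * (M' 0 1) := by
    rw [uu_a hA, uu_b hC, vv_a hB, vv_b hD]
  have he₀ : (r : ℤ) * ((M' 0 0 - 1) * (M' 1 1 - 1) - (M' 1 0) * (M' 0 1)) ∈ Kc ψ := by
    have h := comm_mem ψ (uu ψ) (vv ψ)
    rw [comm_eval, huv] at h
    exact h
  obtain ⟨t, ht⟩ := (hmemKc _).mp he₀
  have hrne : ((r : ℤ)) ≠ 0 := by exact_mod_cast hr.ne'
  have he₀ne : (r : ℤ) * ((M' 0 0 - 1) * (M' 1 1 - 1) - (M' 1 0) * (M' 0 1)) ≠ 0 :=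
    mul_ne_zero hrne hd
  have htne : t ≠ 0 := by
    rintro rfl
    rw [mul_zero] at ht
    exact he₀ne ht
  set s' : ℤ := s₀ * t.sign with hs'def
  set r' : ℕ := t.natAbs with hr'def
  have hr'pos : 0 < r' := Int.natAbs_pos.mpr htne
  have hkey : s' * (r' : ℤ) = (r:ℤ) * ((uu ψ).a * (vv ψ).b - (uu ψ).b * (vv ψ).a) := by
    rw [huv, ht]
    have h1 : t.sign * (t.natAbs : ℤ) = t := Int.sign_mul_natAbs t
    calc s' * (r' : ℤ) = s₀ * (t.sign * (t.natAbs : ℤ)) := by rw [hs'def, hr'def]; ring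
    _ = s₀ * t := by rw [h1]
  have hsign1 : t.sign = 1 ∨ t.sign = -1 := by
    rcases htne.lt_or_gt with h | h
    · right; exact Int.sign_eq_neg_one_iff_neg.mpr h
    · left; exact Int.sign_eq_one_iff_pos.mpr h
  have hs'gen : ∀ e : ℤ, e ∈ Kc ψ ↔ s' ∣ e := by
    intro e
    rw [hmemKc e, hs'def]
    rcases hsign1 with h | h <;> rw [h]
    · simp
    · rw [mul_neg_one, neg_dvd]
  have hs'ne : s' ≠ 0 := by
    rw [hs'def]
    rcases hsign1 with h | h <;> rw [h] <;> simpa using hs₀ne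
  have hdu : (uu ψ).a * (vv ψ).b - (uu ψ).b * (vv ψ).a ≠ 0 := by rw [huv]; exact hd
  -- finiteness of the quotient
  have hfin : Finite (Heis r ⧸ KS ψ) := KS_finite_quotient hr hA hC hB hD hd
  -- part (i), second statement
  have hKEY : Subgroup.map (heisProj r)
      (Subgroup.comap (SemidirectProduct.inl : Heis r →* HeisSdp r ψ)
        (commutator (HeisSdp r ψ)))
      = AddSubgroup.toSubgroup
          (LinearMap.range (Matrix.mulVecLin (M' - 1))).toAddSubgroup := by
    rw [comap_commutator_eq]
    ext w
    constructor
    · rintro ⟨x, hx, rfl⟩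
      obtain ⟨m, n, h1, h2⟩ := KS_proj hr hA hC hB hD hx
      show ∃ ν : Fin 2 → ℤ, Matrix.mulVecLin (M' - 1) ν = Multiplicative.toAdd (heisProj r x)
      refine ⟨![m, n], ?_⟩
      have hpx : Multiplicative.toAdd (heisProj r x) = ![x.a, x.b] := rfl
      rw [hpx]
      funext i
      fin_cases i
      · show ((M' - 1).mulVec ![m, n]) 0 = x.a
        simp [Matrix.mulVec, dotProduct, Fin.sum_univ_two, Matrix.sub_apply,
          Matrix.one_apply, h1]
        ring
      · show ((M' - 1).mulVec ![m, n]) 1 = x.b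
        simp [Matrix.mulVec, dotProduct, Fin.sum_univ_two, Matrix.sub_apply,
          Matrix.one_apply, h2]
        ring
    · intro hw
      obtain ⟨ν, hν⟩ := hw
      refine ⟨uu ψ ^ (ν 0) * vv ψ ^ (ν 1),
        mul_mem (zpow_mem (uu_mem ψ) _) (zpow_mem (vv_mem ψ) _), ?_⟩
      show Multiplicative.ofAdd ![(uu ψ ^ (ν 0) * vv ψ ^ (ν 1)).a,
        (uu ψ ^ (ν 0) * vv ψ ^ (ν 1)).b] = w
      rw [← ofAdd_toAdd w]
      congr 1
      rw [← hν]
      funext i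
      fin_cases i
      · show (uu ψ ^ (ν 0) * vv ψ ^ (ν 1)).a = ((M' - 1).mulVec ν) 0
        rw [(uv_zpow_a hA hC hB hD (ν 0) (ν 1)).1]
        simp [Matrix.mulVec, dotProduct, Fin.sum_univ_two, Matrix.sub_apply,
          Matrix.one_apply]
        ring
      · show (uu ψ ^ (ν 0) * vv ψ ^ (ν 1)).b = ((M' - 1).mulVec ν) 1
        rw [(uv_zpow_a hA hC hB hD (ν 0) (ν 1)).2]
        simp [Matrix.mulVec, dotProduct, Fin.sum_univ_two, Matrix.sub_apply,
          Matrix.one_apply]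
        ring
  -- part (i), third statement: the projected image is free abelian of rank 2
  have hISO : Nonempty ((Subgroup.map (heisProj r)
      (Subgroup.comap (SemidirectProduct.inl : Heis r →* HeisSdp r ψ)
        (commutator (HeisSdp r ψ)))) ≃* Multiplicative (Fin 2 → ℤ)) := by
    have hmem : ∀ w : Multiplicative (Fin 2 → ℤ),
        (AddMonoidHom.toMultiplicative (Matrix.mulVecLin (M' - 1)).toAddMonoidHom) w ∈
          Subgroup.map (heisProj r)
            (Subgroup.comap (SemidirectProduct.inl : Heis r →* HeisSdp r ψ)
              (commutator (HeisSdp r ψ))) := by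
      intro w
      rw [hKEY]
      exact ⟨Multiplicative.toAdd w, rfl⟩
    set g := MonoidHom.codRestrict
        (AddMonoidHom.toMultiplicative (Matrix.mulVecLin (M' - 1)).toAddMonoidHom) _ hmem
      with hg
    have hginj : Function.Injective g := by
      intro w1 w2 hw
      have h0 : (M' - 1).mulVec (Multiplicative.toAdd w1)
          = (M' - 1).mulVec (Multiplicative.toAdd w2) :=
        congrArg Multiplicative.toAdd (congrArg Subtype.val hw)
      have hv0 := congrFun h0 0
      have hv1 := congrFun h0 1
      simp only [Matrix.mulVec, dotProduct, Fin.sum_univ_two, Matrix.sub_apply,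
        Matrix.one_apply_eq, Matrix.one_apply_ne] at hv0 hv1
      set w1' := Multiplicative.toAdd w1
      set w2' := Multiplicative.toAdd w2
      have e1 : (w1' 0 - w2' 0) * (M' 0 0 - 1) + (w1' 1 - w2' 1) * (M' 0 1) = 0 := by
        simp only [Matrix.one_apply] at hv0
        norm_num at hv0
        linarith
      have e2 : (w1' 0 - w2' 0) * (M' 1 0) + (w1' 1 - w2' 1) * (M' 1 1 - 1) = 0 := by
        simp only [Matrix.one_apply] at hv1
        norm_num at hv1
        linarith
      obtain ⟨z1, z2⟩ := indep hd e1 e2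
      have : w1' = w2' := by
        funext i
        fin_cases i
        · show w1' 0 = w2' 0; linarith
        · show w1' 1 = w2' 1; linarith
      exact Multiplicative.toAdd.injective this
    have hgsurj : Function.Surjective g := by
      rintro ⟨w, hw⟩
      rw [hKEY] at hw
      obtain ⟨ν, hν⟩ := hw
      refine ⟨Multiplicative.ofAdd ν, Subtype.ext ?_⟩
      show Multiplicative.ofAdd ((M' - 1).mulVec ν) = w
      rw [← ofAdd_toAdd w]
      exact congrArg Multiplicative.ofAdd (((Matrix.mulVecLin_apply (M' - 1) ν).symm).trans hν)
    exact ⟨(MulEquiv.ofBijective g ⟨hginj, hgsurj⟩).symm⟩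
  -- part (ii): the commutator subgroup is isomorphic to some Heis r'
  have hIICiso : Nonempty (commutator (HeisSdp r ψ) ≃* Heis r') := by
    have hrange := heisHom_range hr hA hC hB hD s' r' hkey hs'gen
    have hinj := heisHom_injective (uu ψ) (vv ψ) s' r' hkey hdu hs'ne
    have e3 : Heis r' ≃* ↥(KS ψ) := by
      refine MulEquiv.ofBijective
        (MonoidHom.codRestrict (heisHom (uu ψ) (vv ψ) s' r' hkey) (KS ψ)
          (fun y => (hrange _).mpr ⟨y, rfl⟩)) ⟨?_, ?_⟩
      · intro a b hab
        exact hinj (congrArg Subtype.val hab)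
      · rintro ⟨x, hx⟩
        obtain ⟨y, hy⟩ := (hrange x).mp hx
        exact ⟨y, Subtype.ext hy⟩
    exact ⟨((MulEquiv.subgroupCongr (commutator_eq_map ψ)).trans
      ((Subgroup.equivMapOfInjective (KS ψ) _ SemidirectProduct.inl_injective).symm)).trans
      e3.symm⟩
  -- part (iii) : the radical characterization
  have hrad : ∀ g : HeisSdp r ψ,
      g ∈ (SemidirectProduct.inl : Heis r →* HeisSdp r ψ).range ↔
        ∃ k : ℕ, 0 < k ∧ g ^ k ∈ commutator (HeisSdp r ψ) := by
    intro g
    constructor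
    · rintro ⟨x, rfl⟩
      refine ⟨Nat.card (Heis r ⧸ KS ψ), Nat.card_pos, ?_⟩
      have hq : (QuotientGroup.mk' (KS ψ)) (x ^ Nat.card (Heis r ⧸ KS ψ)) = 1 := by
        rw [map_pow]
        exact pow_card_eq_one'
      have hxk : x ^ Nat.card (Heis r ⧸ KS ψ) ∈ KS ψ := (QuotientGroup.eq_one_iff _).mp hq
      rw [← map_pow, commutator_eq_map]
      exact ⟨_, hxk, rfl⟩
    · rintro ⟨k, hk, hgk⟩
      have h1 : g ^ k ∈ (SemidirectProduct.inl : Heis r →* HeisSdp r ψ).range :=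
        commutator_le_range ψ hgk
      rw [SemidirectProduct.range_inl_eq_ker_rightHom] at h1 ⊢
      rw [MonoidHom.mem_ker] at h1 ⊢
      rw [map_pow] at h1
      have h2 := congrArg Multiplicative.toAdd h1
      rw [toAdd_pow] at h2
      have h3 : (k : ℤ) * Multiplicative.toAdd (SemidirectProduct.rightHom g) = 0 := by
        simpa [nsmul_eq_mul] using h2
      have h4 : Multiplicative.toAdd (SemidirectProduct.rightHom g) = 0 := by
        rcases mul_eq_zero.mp h3 with h | h
        · exfalso
          have : (k : ℤ) ≠ 0 := by exact_mod_cast hk.ne'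
          exact this h
        · exact h
      rw [← ofAdd_toAdd (SemidirectProduct.rightHom g), h4]
      rfl
  refine ⟨⟨commutator_le_range ψ, hKEY, hISO⟩, ⟨⟨r', hr'pos, hIICiso⟩, ?_⟩, hrad, ?_⟩
  · rw [comap_commutator_eq]
    exact Subgroup.finiteIndex_of_finite_quotient
  · refine Subgroup.characteristic_iff_comap_eq.mpr (fun ϕ => ?_)
    have hcc := Subgroup.characteristic_iff_comap_eq.mp
      (inferInstance : (commutator (HeisSdp r ψ)).Characteristic) ϕ
    have hchar : ∀ x : HeisSdp r ψ,
        ϕ x ∈ commutator (HeisSdp r ψ) ↔ x ∈ commutator (HeisSdp r ψ) := by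
      intro x
      constructor
      · intro h
        have h2 : x ∈ Subgroup.comap ϕ.toMonoidHom (commutator (HeisSdp r ψ)) :=
          Subgroup.mem_comap.mpr h
        rwa [hcc] at h2
      · intro h
        have h2 : x ∈ Subgroup.comap ϕ.toMonoidHom (commutator (HeisSdp r ψ)) := by
          rwa [hcc]
        exact Subgroup.mem_comap.mp h2
    ext g
    constructor
    · intro h
      have h' : ϕ g ∈ (SemidirectProduct.inl : Heis r →* HeisSdp r ψ).range := h
      obtain ⟨k, hk, hc⟩ := (hrad (ϕ g)).mp h'
      refine (hrad g).mpr ⟨k, hk, ?_⟩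
      rw [← hchar (g ^ k), map_pow]
      exact hc
    · intro h
      obtain ⟨k, hk, hc⟩ := (hrad g).mp h
      have h' : ϕ g ∈ (SemidirectProduct.inl : Heis r →* HeisSdp r ψ).range :=
        (hrad (ϕ g)).mpr ⟨k, hk, by rw [← map_pow]; exact (hchar _).mpr hc⟩
      exact h'
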